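/- arXiv:1201.2363 — 8 statements merged into one kernel-verified Lean document; each statement's English description precedes it below -/
import Mathlib

section
/- Let m and n be positive odd integers. The number of group homomorphisms from the dihedral group D_m into D_n is 1 + n·(∑_{k | gcd(m,n)} φ(k)), where φ is Euler's totient function. -/
open DihedralGroup in
def mkHom {m n : ℕ} (g : ZMod m →+ ZMod n) (j : ZMod n) :
    DihedralGroup m →* DihedralGroup n where
  toFun x := match x with
    | .r k => .r (g k)
    | .sr k => .sr (j + g k)
  map_one' := by simp [DihedralGroup.one_def, -DihedralGroup.r_zero]
  map_mul' := by
    rintro (a | a) (b | b) <;>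
      simp only [r_mul_r, r_mul_sr, sr_mul_r, sr_mul_sr, map_add, map_sub] <;> ring_nf

open DihedralGroup in
theorem my_r_pow {m : ℕ} (k : ZMod m) (p : ℕ) :
    (DihedralGroup.r k) ^ p = DihedralGroup.r (p • k) := by
  induction p with
  | zero => simp [DihedralGroup.one_def, -DihedralGroup.r_zero]
  | succ p ih => rw [pow_succ, ih, r_mul_r, succ_nsmul]

theorem mem_tors {m n : ℕ} (hm : 0 < m) (hn : 0 < n) (x : ZMod n) (hx : m • x = 0) :
    x ∈ AddSubgroup.zmultiples (((n / Nat.gcd m n : ℕ) : ZMod n)) := by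
  have : NeZero n := ⟨hn.ne'⟩
  set g := Nat.gcd m n with hg
  have hgpos : 0 < g := Nat.gcd_pos_of_pos_left n hm
  have hx' : (n : ℕ) ∣ m * x.val := by
    have : ((m * x.val : ℕ) : ZMod n) = 0 := by
      push_cast
      rw [ZMod.natCast_val, ZMod.cast_id, ← nsmul_eq_mul, hx]
    exact (ZMod.natCast_eq_zero_iff _ _).mp this
  have hdvd : (n / g) ∣ x.val := by
    have h1 : (n / g) ∣ (m / g) * x.val := by
      rcases hx' with ⟨c, hc⟩
      refine ⟨c, ?_⟩
      apply Nat.eq_of_mul_eq_mul_left hgpos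
      rw [← Nat.mul_assoc, ← Nat.mul_assoc, Nat.mul_div_cancel' (Nat.gcd_dvd_left m n),
        Nat.mul_div_cancel' (Nat.gcd_dvd_right m n), ← hc, Nat.mul_comm]
    have hcop : Nat.Coprime (m / g) (n / g) := Nat.coprime_div_gcd_div_gcd hgpos
    exact (Nat.Coprime.dvd_of_dvd_mul_left hcop.symm h1)
  rcases hdvd with ⟨c, hc⟩
  refine AddSubgroup.mem_zmultiples_iff.mpr ⟨c, ?_⟩
  have : x = ((x.val : ℕ) : ZMod n) := by rw [ZMod.natCast_val, ZMod.cast_id]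
  rw [this, hc]
  push_cast
  rw [zsmul_eq_mul, mul_comm]
  push_cast
  ring

theorem card_addHom (m n : ℕ) (hm : 0 < m) (hn : 0 < n) :
    Nat.card (ZMod m →+ ZMod n) = Nat.gcd m n := by
  have : NeZero n := ⟨hn.ne'⟩
  have : NeZero m := ⟨hm.ne'⟩
  set g := Nat.gcd m n with hg
  have hgpos : 0 < g := Nat.gcd_pos_of_pos_left n hm
  set S := AddSubgroup.zmultiples (((n / g : ℕ) : ZMod n)) with hS
  -- bijection f ↦ f 1
  have hsm : ∀ f : ZMod m →+ ZMod n, m • f 1 = 0 := by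
    intro f
    rw [← map_nsmul, nsmul_eq_mul, mul_one, ZMod.natCast_self, map_zero]
  have hbij : Function.Bijective (fun f : ZMod m →+ ZMod n => (⟨f 1, mem_tors hm hn _ (hsm f)⟩ : S)) := by
    constructor
    · intro f f' h
      have h1 : f 1 = f' 1 := congrArg Subtype.val h
      ext x
      obtain ⟨k, rfl⟩ := ZMod.intCast_surjective x
      rw [show ((k : ℤ) : ZMod m) = k • (1 : ZMod m) by rw [zsmul_one], map_zsmul, map_zsmul, h1]
    · rintro ⟨x, hxS⟩
      have hmx : (m : ℤ) • x = 0 := by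
        rcases AddSubgroup.mem_zmultiples_iff.mp hxS with ⟨c, hc⟩
        rw [← hc, smul_comm]
        have : (m : ℤ) • ((n / g : ℕ) : ZMod n) = 0 := by
          rw [natCast_zsmul, nsmul_eq_mul]
          have : ((m * (n / g) : ℕ) : ZMod n) = 0 := by
            rw [ZMod.natCast_eq_zero_iff]
            exact ⟨m / g, by
              rw [← Nat.mul_div_assoc _ (Nat.gcd_dvd_right m n), Nat.mul_comm,
                Nat.mul_div_assoc _ (Nat.gcd_dvd_left m n)]⟩
          push_cast at this
          rw [← this]
        rw [this, smul_zero]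
      refine ⟨ZMod.lift m ⟨zmultiplesHom _ x, by simpa using hmx⟩, ?_⟩
      ext
      simp only
      rw [show (1 : ZMod m) = ((1 : ℤ) : ZMod m) by push_cast; rfl, ZMod.lift_coe]
      simp
  rw [Nat.card_eq_of_bijective _ hbij, hS, Nat.card_zmultiples, ZMod.addOrderOf_coe _ hn.ne',
    Nat.gcd_eq_right (Nat.div_dvd_of_dvd (Nat.gcd_dvd_right m n)),
    Nat.div_div_self (Nat.gcd_dvd_right m n) hn.ne']

theorem mkHom_r {m n : ℕ} (g : ZMod m →+ ZMod n) (j : ZMod n) (k : ZMod m) :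
    mkHom g j (.r k) = .r (g k) := rfl

theorem mkHom_sr {m n : ℕ} (g : ZMod m →+ ZMod n) (j : ZMod n) (k : ZMod m) :
    mkHom g j (.sr k) = .sr (j + g k) := rfl

theorem two_cancel {n : ℕ} (hno : Odd n) (t : ZMod n) (ht : t + t = 0) : t = 0 := by
  have h2 : (2 : ZMod n) * t = 0 := by rw [two_mul]; exact ht
  have hu : IsUnit (2 : ZMod n) := by
    have : IsUnit ((2 : ℕ) : ZMod n) := by
      rw [ZMod.isUnit_iff_coprime]
      exact Nat.coprime_two_left.mpr hno
    simpa using this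
  exact (hu.mul_right_eq_zero).mp h2

theorem numHom_odd_odd (m n : ℕ) (hm : 0 < m) (hn : 0 < n) (hmo : Odd m) (hno : Odd n) :
    Nat.card (DihedralGroup m →* DihedralGroup n) =
      1 + n * ∑ k ∈ (Nat.gcd m n).divisors, Nat.totient k := by
  have hNm : NeZero m := ⟨hm.ne'⟩
  have hNn : NeZero n := ⟨hn.ne'⟩
  classical
  set F : Option ((ZMod m →+ ZMod n) × ZMod n) → (DihedralGroup m →* DihedralGroup n) :=
    fun o => match o with
      | none => 1
      | some (g, j) => mkHom g j with hF
  have hFin : Finite (ZMod m →+ ZMod n) := Finite.of_injective _ DFunLike.coe_injective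
  have hinj : Function.Injective F := by
    rintro (_ | ⟨g, j⟩) (_ | ⟨g', j'⟩) h
    · rfl
    · have := congrArg (fun ψ : DihedralGroup m →* DihedralGroup n => ψ (.sr 0)) h
      simp only [hF, MonoidHom.one_apply, mkHom_sr, DihedralGroup.one_def] at this
      exact absurd this (by simp [DihedralGroup.one_def, -DihedralGroup.r_zero])
    · have := congrArg (fun ψ : DihedralGroup m →* DihedralGroup n => ψ (.sr 0)) h
      simp only [hF, MonoidHom.one_apply, mkHom_sr, DihedralGroup.one_def] at this
      exact absurd this (by simp [DihedralGroup.one_def, -DihedralGroup.r_zero])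
    · have hj : j = j' := by
        have := congrArg (fun ψ : DihedralGroup m →* DihedralGroup n => ψ (.sr 0)) h
        simp only [hF, mkHom_sr, map_zero, add_zero] at this
        exact DihedralGroup.sr.inj this
      have hg : g = g' := by
        ext1 k
        have := congrArg (fun ψ : DihedralGroup m →* DihedralGroup n => ψ (.r k)) h
        simp only [hF, mkHom_r] at this
        exact DihedralGroup.r.inj this
      rw [hj, hg]
  have hsurj : Function.Surjective F := by
    intro φ
    have step1 : ∀ k : ZMod m, ∃ i, φ (.r k) = .r i := by
      intro k
      rcases h : φ (.r k) with i | t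
      · exact ⟨i, rfl⟩
      · exfalso
        have h1 : φ (.r k) ^ m = 1 := by
          rw [← map_pow, my_r_pow, show m • k = 0 by
            rw [nsmul_eq_mul, ZMod.natCast_self, zero_mul], ← DihedralGroup.one_def, map_one]
        rw [h] at h1
        obtain ⟨l, hl⟩ := hmo
        rw [hl, pow_add, pow_mul, sq, DihedralGroup.sr_mul_self, one_pow, one_mul, pow_one] at h1
        simp [DihedralGroup.one_def, -DihedralGroup.r_zero] at h1
    choose gfun hgf using step1
    have gzero : gfun 0 = 0 := by
      have h2 : φ (.r (0 : ZMod m)) = .r (0 : ZMod n) := by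
        rw [← DihedralGroup.one_def, map_one, DihedralGroup.one_def]
      rw [hgf 0] at h2
      exact DihedralGroup.r.inj h2
    have hadd : ∀ a b : ZMod m, gfun (a + b) = gfun a + gfun b := by
      intro a b
      have h2 : φ (.r (a + b)) = φ (.r a) * φ (.r b) := by
        rw [← map_mul, DihedralGroup.r_mul_r]
      rw [hgf, hgf, hgf, DihedralGroup.r_mul_r] at h2
      exact DihedralGroup.r.inj h2
    set g0 : ZMod m →+ ZMod n := { toFun := gfun, map_zero' := gzero, map_add' := hadd }
      with hg0
    have hsrk : ∀ k : ZMod m, φ (.sr k) = φ (.sr 0) * .r (gfun k) := by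
      intro k
      rw [show (.sr k : DihedralGroup m) = .sr 0 * .r k by
        rw [DihedralGroup.sr_mul_r, zero_add], map_mul, hgf]
    rcases h0 : φ (.sr 0) with t | j
    · -- φ (sr 0) is a rotation : trivial hom
      have ht : t = 0 := by
        have h2 : φ (.sr 0) ^ 2 = 1 := by
          rw [← map_pow, sq, DihedralGroup.sr_mul_self, map_one]
        rw [h0, sq, DihedralGroup.r_mul_r, DihedralGroup.one_def] at h2
        exact two_cancel hno t (DihedralGroup.r.inj h2)
      have hgf0 : ∀ k : ZMod m, gfun k = 0 := by
        intro k
        have h2 : φ (.sr k) ^ 2 = 1 := by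
          rw [← map_pow, sq, DihedralGroup.sr_mul_self, map_one]
        rw [hsrk k, h0, ht, DihedralGroup.r_mul_r, zero_add, sq, DihedralGroup.r_mul_r,
          DihedralGroup.one_def] at h2
        exact two_cancel hno _ (DihedralGroup.r.inj h2)
      refine ⟨none, ?_⟩
      ext x
      rcases x with k | k
      · simp only [hF, MonoidHom.one_apply]
        rw [hgf k, hgf0 k, DihedralGroup.one_def]
      · simp only [hF, MonoidHom.one_apply]
        rw [hsrk k, h0, ht, hgf0 k, DihedralGroup.r_mul_r, zero_add, DihedralGroup.one_def]
    · -- φ (sr 0) is a reflection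
      refine ⟨some (g0, j), ?_⟩
      ext x
      rcases x with k | k
      · rw [show F (some (g0, j)) = mkHom g0 j from rfl, mkHom_r, hgf k]
        rfl
      · rw [show F (some (g0, j)) = mkHom g0 j from rfl, mkHom_sr, hsrk k, h0,
          DihedralGroup.sr_mul_r]
        rfl
  rw [← Nat.card_eq_of_bijective F ⟨hinj, hsurj⟩,
    Nat.card_congr (Equiv.optionEquivSumPUnit.{0, 0} _), Nat.card_sum, Nat.card_prod,
    card_addHom m n hm hn, Nat.card_zmod, Nat.card_eq_fintype_card (α := PUnit.{1}),
    Fintype.card_punit, Nat.sum_totient]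
  ring
end

section
/- Let m and n be positive odd integers with m dividing n. The number of group homomorphisms from D_m into D_n is m·n + 1. -/
open DihedralGroup

namespace NumHomAux

variable {m n : ℕ}

/-- The additive hom `ZMod m →+ A` sending `1` to an `m`-torsion element `a`. -/
def psi (m : ℕ) {A : Type*} [AddGroup A] (a : A) (ha : (m : ℤ) • a = 0) : ZMod m →+ A :=
  ZMod.lift m ⟨zmultiplesHom A a, ha⟩

@[simp] theorem psi_natCast {A : Type*} [AddGroup A] (a : A) (ha : (m : ℤ) • a = 0) (k : ℕ) :
    psi m a ha (k : ZMod m) = k • a := by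
  have : ((k : ℕ) : ZMod m) = ((k : ℤ) : ZMod m) := by push_cast; rfl
  rw [this, psi, ZMod.lift_coe]
  simp [zmultiplesHom]

theorem psi_apply [NeZero m] {A : Type*} [AddGroup A] (a : A) (ha : (m : ℤ) • a = 0)
    (j : ZMod m) : psi m a ha j = j.val • a := by
  conv_lhs => rw [← ZMod.natCast_zmod_val j]
  exact psi_natCast a ha j.val

/-- The underlying function of the homomorphism `D_m → D_n` parametrized by a torsion
element `a` and `c`. -/
def Ffun (a : ZMod n) (ha : (m : ℤ) • a = 0) (c : ZMod n) :
    DihedralGroup m → DihedralGroup n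
  | .r j => .r (psi m a ha j)
  | .sr j => .sr (c + psi m a ha j)

/-- The homomorphism `D_m →* D_n` sending `r j ↦ r (j • a)`, `sr j ↦ sr (c + j • a)`. -/
def F (a : ZMod n) (ha : (m : ℤ) • a = 0) (c : ZMod n) :
    DihedralGroup m →* DihedralGroup n where
  toFun := Ffun a ha c
  map_one' := by
    show Ffun a ha c (.r 0) = 1
    simp [Ffun, one_def, -r_zero]
  map_mul' := by
    rintro (j | j) (k | k) <;>
      simp only [r_mul_r, r_mul_sr, sr_mul_r, sr_mul_sr, Ffun, map_add, map_sub] <;>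
      congr 1 <;> ring

@[simp] theorem F_r (a : ZMod n) (ha : (m : ℤ) • a = 0) (c : ZMod n) (j : ZMod m) :
    F a ha c (.r j) = .r (psi m a ha j) := rfl

@[simp] theorem F_sr (a : ZMod n) (ha : (m : ℤ) • a = 0) (c : ZMod n) (j : ZMod m) :
    F a ha c (.sr j) = .sr (c + psi m a ha j) := rfl

end NumHomAux

open NumHomAux

theorem numHom_odd_odd_dvd (m n : ℕ) (hm : 0 < m) (hn : 0 < n) (hmo : Odd m) (hno : Odd n)
    (hdvd : m ∣ n) :
    Nat.card (DihedralGroup m →* DihedralGroup n) = m * n + 1 := by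
  haveI : NeZero m := ⟨hm.ne'⟩
  haveI : NeZero n := ⟨hn.ne'⟩
  set d : ℕ := n / m with hd_def
  have hmd : m * d = n := Nat.mul_div_cancel' hdvd
  have hd_pos : 0 < d := Nat.div_pos (Nat.le_of_dvd hn hdvd) hm
  -- torsion property of d
  have hdtor : (m : ℤ) • ((d : ℕ) : ZMod n) = 0 := by
    have h0 : ((m * d : ℕ) : ZMod n) = 0 := by rw [hmd]; exact ZMod.natCast_self n
    rw [zsmul_eq_mul]
    push_cast at h0 ⊢
    linear_combination h0
  -- alpha : ZMod m →+ ZMod n, i ↦ i • d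
  set alpha : ZMod m →+ ZMod n := psi m ((d : ℕ) : ZMod n) hdtor with halpha_def
  have halpha (i : ZMod m) : alpha i = ((i.val * d : ℕ) : ZMod n) := by
    rw [halpha_def, psi_apply, nsmul_eq_mul]
    push_cast
    ring
  have halpha_tor (i : ZMod m) : (m : ℤ) • alpha i = 0 := by
    rw [← map_zsmul]
    have : (m : ℤ) • i = 0 := by
      rw [zsmul_eq_mul]; push_cast; rw [ZMod.natCast_self, zero_mul]
    rw [this, map_zero]
  have halpha_inj : Function.Injective alpha := by
    intro i i' h
    rw [halpha i, halpha i'] at h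
    have h1 : i.val * d < n := by rw [← hmd]; exact (Nat.mul_lt_mul_right hd_pos).mpr (ZMod.val_lt i)
    have h2 : i'.val * d < n := by rw [← hmd]; exact (Nat.mul_lt_mul_right hd_pos).mpr (ZMod.val_lt i')
    have := congrArg ZMod.val h
    rw [ZMod.val_cast_of_lt h1, ZMod.val_cast_of_lt h2] at this
    exact ZMod.val_injective m (Nat.eq_of_mul_eq_mul_right hd_pos this)
  -- helper: x + x = 0 in ZMod n with n odd implies x = 0
  have odd_half : ∀ x : ZMod n, x + x = 0 → x = 0 := by
    intro x hx
    have h2 : ((2 * x.val : ℕ) : ZMod n) = 0 := by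
      push_cast [two_mul]; rw [ZMod.natCast_zmod_val]; exact hx
    rw [ZMod.natCast_eq_zero_iff] at h2
    have hcop : Nat.Coprime n 2 := by
      refine Nat.coprime_comm.mp ((Nat.prime_two.coprime_iff_not_dvd).mpr ?_)
      intro h
      exact (Nat.not_even_iff_odd.mpr hno) (even_iff_two_dvd.mpr h)
    have : n ∣ x.val := (Nat.Coprime.dvd_of_dvd_mul_left hcop h2)
    have := Nat.eq_zero_of_dvd_of_lt this (ZMod.val_lt x)
    · exact ZMod.val_injective n (by simpa using this)
  -- the parametrization
  set G : Option (ZMod m × ZMod n) → (DihedralGroup m →* DihedralGroup n) :=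
    fun o => Option.rec 1 (fun p => F (alpha p.1) (halpha_tor p.1) p.2) o with hG_def
  have hG_bij : Function.Bijective G := by
    constructor
    · rintro (_ | ⟨i, c⟩) (_ | ⟨i', c'⟩) h
      · rfl
      · have := congrArg (fun f => f (DihedralGroup.sr 0)) h
        simp [hG_def, one_def, -r_zero] at this
      · have := congrArg (fun f => f (DihedralGroup.sr 0)) h
        simp [hG_def, one_def, -r_zero] at this
      · have hc := congrArg (fun f => f (DihedralGroup.sr 0)) h
        simp [hG_def] at hc
        have hi := congrArg (fun f => f (DihedralGroup.r 1)) h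
        have h1 : ((1 : ZMod m)) = ((1 : ℕ) : ZMod m) := by norm_num
        simp only [hG_def, F_r, h1, psi_natCast, one_smul] at hi
        simp only [DihedralGroup.r.injEq] at hi
        simp only [Option.some.injEq, Prod.mk.injEq]
        exact ⟨halpha_inj hi, hc⟩
    · intro φ
      -- φ (r 1) is a rotation
      have hr1 : ∃ a : ZMod n, φ (.r 1) = .r a := by
        rcases h : φ (.r 1) with a | a
        · exact ⟨a, rfl⟩
        · exfalso
          have hpow : (DihedralGroup.sr a : DihedralGroup n) ^ m = 1 := by
            rw [← h, ← map_pow, r_one_pow, ZMod.natCast_self, ← one_def, map_one]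
          have := orderOf_dvd_of_pow_eq_one hpow
          rw [DihedralGroup.orderOf_sr] at this
          rw [← Nat.not_even_iff_odd] at hmo
          exact hmo (even_iff_two_dvd.mpr this)
      obtain ⟨a, ha⟩ := hr1
      -- r j = (r 1)^(j.val)
      have hrj : ∀ j : ZMod m, (DihedralGroup.r j : DihedralGroup m) = (.r 1) ^ j.val := by
        intro j; rw [r_one_pow, ZMod.natCast_zmod_val]
      have hφr : ∀ j : ZMod m, φ (.r j) = .r ((j.val : ZMod n) * a) := by
        intro j
        rw [hrj j, map_pow, ha]
        conv_lhs => rw [← ZMod.natCast_zmod_val a, ← r_one_pow, ← pow_mul, r_one_pow]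
        congr 1
        push_cast
        rw [ZMod.natCast_zmod_val]
        ring
      -- torsion of a
      have hator : (m : ℤ) • a = 0 := by
        have hpow : (DihedralGroup.r a : DihedralGroup n) ^ m = 1 := by
          rw [← ha, ← map_pow, r_one_pow, ZMod.natCast_self, ← one_def, map_one]
        rw [← ZMod.natCast_zmod_val a, ← r_one_pow, ← pow_mul, r_one_pow, one_def,
          DihedralGroup.r.injEq] at hpow
        rw [zsmul_eq_mul]
        push_cast at hpow ⊢
        rw [ZMod.natCast_zmod_val] at hpow
        linear_combination hpow
      rcases hs : φ (.sr 0) with x | c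
      · -- rotation case: φ is trivial
        refine ⟨none, ?_⟩
        have hx : x = 0 := by
          have h2 : (DihedralGroup.sr (0 : ZMod m)) * (.sr 0) = 1 := by
            rw [sr_mul_sr, sub_self, ← one_def]
          have := congrArg φ h2
          rw [map_mul, hs, map_one, r_mul_r, one_def, DihedralGroup.r.injEq] at this
          exact odd_half x this
        have ha0 : a = 0 := by
          have hconj : (DihedralGroup.sr (0 : ZMod m)) * (.r 1) * (.sr 0) = (.r 1)⁻¹ := by
            show _ = DihedralGroup.r (-1)
            rw [sr_mul_r, sr_mul_sr]
            norm_num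
          have := congrArg φ hconj
          rw [map_mul, map_mul, hs, hx, map_inv, ha, ← one_def, one_mul, mul_one] at this
          have hinv : (DihedralGroup.r a : DihedralGroup n)⁻¹ = .r (-a) := rfl
          rw [hinv, DihedralGroup.r.injEq] at this
          have : a + a = 0 := by linear_combination this
          exact odd_half a this
        ext x
        rcases x with j | j
        · symm; show φ (.r j) = 1
          rw [hφr j, ha0, mul_zero]
          rfl
        · symm; show φ (.sr j) = 1
          have hsj : (DihedralGroup.sr (0 : ZMod m)) * (.r j) = .sr j := by
            rw [sr_mul_r, zero_add]
          rw [← hsj, map_mul, hs, hx, hφr j, ha0, mul_zero, r_mul_r, add_zero]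
          rfl
      · -- reflection case
        -- d ∣ a.val
        have hdvd' : n ∣ a.val * m := by
          have : ((a.val * m : ℕ) : ZMod n) = 0 := by
            push_cast
            rw [ZMod.natCast_zmod_val]
            have := hator
            rw [zsmul_eq_mul] at this
            push_cast at this
            linear_combination this
          exact (ZMod.natCast_eq_zero_iff _ _).mp this
        have hda : d ∣ a.val := by
          obtain ⟨t, ht⟩ := hdvd'
          refine ⟨t, ?_⟩
          have : m * a.val = m * (d * t) := by
            rw [mul_comm m a.val, ht, ← hmd]; ring
          exact Nat.eq_of_mul_eq_mul_left hm this
        set i : ZMod m := ((a.val / d : ℕ) : ZMod m) with hi_def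
        have hiv : i.val = a.val / d := by
          rw [hi_def, ZMod.val_natCast]
          apply Nat.mod_eq_of_lt
          apply Nat.div_lt_of_lt_mul
          rw [mul_comm, hmd]
          exact ZMod.val_lt a
        have hai : alpha i = a := by
          rw [halpha, hiv, Nat.div_mul_cancel hda, ZMod.natCast_zmod_val]
        refine ⟨some (i, c), ?_⟩
        ext x
        symm
        rcases x with j | j
        · simp only [hG_def, F_r]
          rw [hφr j, psi_apply, hai, nsmul_eq_mul, mul_comm]
        · have hsj : (DihedralGroup.sr (0 : ZMod m)) * (.r j) = .sr j := by
            rw [sr_mul_r, zero_add]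
          simp only [hG_def, F_sr]
          rw [← hsj, map_mul, hs, hφr j, sr_mul_r, psi_apply, hai, nsmul_eq_mul, mul_comm]
  rw [← Nat.card_eq_of_bijective G hG_bij]
  rw [Nat.card_eq_fintype_card, Fintype.card_option, Fintype.card_prod, ZMod.card, ZMod.card]
end

section
/- For a positive odd integer n, the number of group endomorphisms of the dihedral group D_n is n² + 1. -/
open DihedralGroup

def dihPhi (n : ℕ) (a b : ZMod n) : DihedralGroup n →* DihedralGroup n where
  toFun x := match x with
    | .r i => .r (a * i)
    | .sr i => .sr (b + a * i)
  map_one' := by simp [DihedralGroup.one_def, -r_zero]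
  map_mul' := by
    rintro (i | i) (j | j) <;>
      simp only [r_mul_r, r_mul_sr, sr_mul_r, sr_mul_sr] <;> ring_nf

theorem numEnd_odd (n : ℕ) (hn : 0 < n) (hno : Odd n) :
    Nat.card (DihedralGroup n →* DihedralGroup n) = n ^ 2 + 1 := by
  haveI : NeZero n := ⟨hn.ne'⟩
  obtain ⟨m, hm⟩ := hno
  have half : ∀ c : ZMod n, c + c = 0 → c = 0 := by
    intro c hc
    have hn0 : ((2 * m + 1 : ℕ) : ZMod n) = 0 := by rw [← hm]; exact ZMod.natCast_self n
    push_cast at hn0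
    linear_combination (m : ZMod n) * hc + hc - c * hn0
  have rpow : ∀ (i : ZMod n) (k : ℕ), (DihedralGroup.r i : DihedralGroup n) ^ k
      = DihedralGroup.r ((k : ZMod n) * i) := by
    intro i k
    induction k with
    | zero => simp [DihedralGroup.one_def, -r_zero]
    | succ k ih => rw [pow_succ, ih, r_mul_r]; push_cast; ring_nf
  have rn : ∀ i : ZMod n, (DihedralGroup.r i : DihedralGroup n) ^ n = 1 := by
    intro i
    rw [rpow, ZMod.natCast_self, zero_mul, DihedralGroup.one_def]
  set F : Option (ZMod n × ZMod n) → (DihedralGroup n →* DihedralGroup n) :=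
    fun o => match o with
    | none => 1
    | some (a, b) => dihPhi n a b with hF
  have hbij : Function.Bijective F := by
    constructor
    · rintro (_ | ⟨a, b⟩) (_ | ⟨a', b'⟩) h
      · rfl
      · exfalso
        have := DFunLike.congr_fun h (DihedralGroup.sr 0)
        simp [hF, dihPhi, DihedralGroup.one_def, -r_zero] at this
      · exfalso
        have := DFunLike.congr_fun h (DihedralGroup.sr 0)
        simp [hF, dihPhi, DihedralGroup.one_def, -r_zero] at this
      · have h1 := DFunLike.congr_fun h (DihedralGroup.r 1)
        have h2 := DFunLike.congr_fun h (DihedralGroup.sr 0)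
        change DihedralGroup.r (a * 1) = DihedralGroup.r (a' * 1) at h1
        change DihedralGroup.sr (b + a * 0) = DihedralGroup.sr (b' + a' * 0) at h2
        simp [hF, dihPhi] at h1 h2
        simp [h1, h2]
    · intro f
      have hsq : f (DihedralGroup.sr 0) * f (DihedralGroup.sr 0) = 1 := by
        rw [← map_mul, sr_mul_sr, sub_zero, ← DihedralGroup.one_def, map_one]
      rcases hy : f (DihedralGroup.sr 0) with c | b
      · -- rotation case: f is trivial
        refine ⟨none, ?_⟩
        rw [hy, r_mul_r] at hsq
        have hc : c = 0 := half c (by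
          rw [DihedralGroup.one_def] at hsq
          exact DihedralGroup.r.inj hsq)
        have hy1 : f (DihedralGroup.sr 0) = 1 := by
          rw [hy, hc, DihedralGroup.one_def]
        have hsr : ∀ i : ZMod n, f (DihedralGroup.sr i) = f (DihedralGroup.r i) := by
          intro i
          have h0 : (DihedralGroup.sr 0 : DihedralGroup n) * DihedralGroup.r i
              = DihedralGroup.sr i := by rw [sr_mul_r, zero_add]
          rw [← h0, map_mul, hy1, one_mul]
        have hr1 : ∀ i : ZMod n, f (DihedralGroup.r i) = 1 := by
          intro i
          have h2 : f (DihedralGroup.r i) ^ 2 = 1 := by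
            rw [← hsr, sq, ← map_mul, sr_mul_sr, sub_self, ← DihedralGroup.one_def,
              map_one]
          have hnn : f (DihedralGroup.r i) ^ n = 1 := by
            rw [← map_pow, rn, map_one]
          calc f (DihedralGroup.r i)
              = f (DihedralGroup.r i) ^ (2 * m + 1) := by
                rw [pow_add, pow_mul, h2, one_pow, one_mul, pow_one]
            _ = f (DihedralGroup.r i) ^ n := congrArg (f (DihedralGroup.r i) ^ ·) hm.symm
            _ = 1 := hnn
        ext x
        rcases x with i | i
        · rw [hr1]; rfl
        · rw [hsr, hr1]; rfl
      · -- reflection case: f = dihPhi a b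
        have hx : ∃ a : ZMod n, f (DihedralGroup.r 1) = DihedralGroup.r a := by
          rcases hx' : f (DihedralGroup.r 1) with a | d
          · exact ⟨a, rfl⟩
          · exfalso
            have hnn : f (DihedralGroup.r 1) ^ n = 1 := by
              rw [← map_pow, rn, map_one]
            rw [hx'] at hnn
            have : orderOf (DihedralGroup.sr d : DihedralGroup n) ∣ n :=
              orderOf_dvd_of_pow_eq_one hnn
            rw [DihedralGroup.orderOf_sr] at this
            omega
        obtain ⟨a, ha⟩ := hx
        refine ⟨some (a, b), ?_⟩
        have hr : ∀ i : ZMod n, f (DihedralGroup.r i) = DihedralGroup.r (a * i) := by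
          intro i
          have h1 : (DihedralGroup.r 1 : DihedralGroup n) ^ i.val
              = DihedralGroup.r i := by
            rw [r_one_pow, ZMod.natCast_val, ZMod.cast_id]
          rw [← h1, map_pow, ha, rpow]
          congr 1
          rw [ZMod.natCast_val, ZMod.cast_id, mul_comm]
        ext x
        rcases x with i | i
        · show dihPhi n a b (DihedralGroup.r i) = f (DihedralGroup.r i)
          rw [hr]; rfl
        · show dihPhi n a b (DihedralGroup.sr i) = f (DihedralGroup.sr i)
          have h0 : (DihedralGroup.sr 0 : DihedralGroup n) * DihedralGroup.r i
              = DihedralGroup.sr i := by rw [sr_mul_r, zero_add]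
          have hfsr : f (DihedralGroup.sr i) = DihedralGroup.sr (b + a * i) := by
            rw [← h0, map_mul, hy, hr, sr_mul_r]
          rw [hfsr]; rfl
  have hcard := Nat.card_eq_of_bijective F hbij
  rw [← hcard]
  simp [Nat.card_eq_fintype_card, ZMod.card, sq]
end

section
/- Let m be a positive odd integer and n a positive even integer. The number of group homomorphisms from D_m into D_n is 2 + n·(∑_{k | gcd(m,n)} φ(k)). -/
open DihedralGroup Finset

namespace NumHomAux

variable {m n : ℕ}

def dihedralEquiv (n : ℕ) : (ZMod n) ⊕ (ZMod n) ≃ DihedralGroup n where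
  toFun i := match i with
    | Sum.inl j => DihedralGroup.r j
    | Sum.inr j => DihedralGroup.sr j
  invFun i := match i with
    | DihedralGroup.r j => Sum.inl j
    | DihedralGroup.sr j => Sum.inr j
  left_inv := by rintro (x | x) <;> rfl
  right_inv := by rintro (x | x) <;> rfl

lemma r_pow (i : ZMod n) (k : ℕ) :
    (DihedralGroup.r i) ^ k = DihedralGroup.r ((k : ZMod n) * i) := by
  induction k with
  | zero => simp [one_def, -r_zero]
  | succ k ih =>
      rw [pow_succ, ih, r_mul_r]
      congr 1
      push_cast
      ring

lemma r_inv (i : ZMod n) : (DihedralGroup.r i)⁻¹ = DihedralGroup.r (-i) :=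
  inv_eq_of_mul_eq_one_right (by rw [r_mul_r, add_neg_cancel, ← one_def])

lemma pow_mod_of_pow_eq_one {G : Type*} [Monoid G] {x : G} (hx : x ^ m = 1) (a : ℕ) :
    x ^ (a % m) = x ^ a := by
  conv_rhs => rw [← Nat.div_add_mod a m, pow_add, pow_mul, hx, one_pow, one_mul]

lemma pow_val_add {G : Type*} [Monoid G] [NeZero m] {x : G} (hx : x ^ m = 1) (i j : ZMod m) :
    x ^ (i + j).val = x ^ i.val * x ^ j.val := by
  rw [ZMod.val_add, pow_mod_of_pow_eq_one hx, pow_add]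

abbrev P (m : ℕ) (x y : DihedralGroup n) : Prop :=
  x ^ m = 1 ∧ y * y = 1 ∧ y * x * y = x⁻¹

section Hom

variable [NeZero m] {x y : DihedralGroup n}

def toHomFun (x y : DihedralGroup n) : DihedralGroup m → DihedralGroup n
  | DihedralGroup.r i => x ^ i.val
  | DihedralGroup.sr i => y * x ^ i.val

lemma y_inv (hy : y * y = 1) : y⁻¹ = y := inv_eq_of_mul_eq_one_right hy

lemma conj_pow_val (hy : y * y = 1) (hc : y * x * y = x⁻¹) (k : ℕ) :
    y * x ^ k * y = (x ^ k)⁻¹ := by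
  have h1 : y * x * y⁻¹ = x⁻¹ := by rw [y_inv hy, hc]
  calc y * x ^ k * y = y * x ^ k * y⁻¹ := by rw [y_inv hy]
    _ = (y * x * y⁻¹) ^ k := (conj_pow).symm
    _ = (x⁻¹) ^ k := by rw [h1]
    _ = (x ^ k)⁻¹ := by rw [inv_pow]

lemma key_sub (hx : x ^ m = 1) (i j : ZMod m) :
    x ^ (j - i).val = (x ^ i.val)⁻¹ * x ^ j.val := by
  rw [eq_inv_mul_iff_mul_eq, ← pow_val_add hx, add_sub_cancel]

lemma toHomFun_mul (hx : x ^ m = 1) (hy : y * y = 1) (hc : y * x * y = x⁻¹)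
    (a b : DihedralGroup m) : toHomFun x y (a * b) = toHomFun x y a * toHomFun x y b := by
  have hxy : ∀ k : ℕ, x ^ k * y = y * (x ^ k)⁻¹ := by
    intro k
    rw [← conj_pow_val hy hc, ← mul_assoc, ← mul_assoc, hy, one_mul]
  rcases a with i | i <;> rcases b with j | j <;>
    simp only [toHomFun, r_mul_r, r_mul_sr, sr_mul_r, sr_mul_sr]
  · exact pow_val_add hx i j
  · rw [key_sub hx, ← mul_assoc (x ^ i.val) y, hxy, mul_assoc]
  · rw [mul_assoc, pow_val_add hx]
  · rw [key_sub hx, show y * x ^ i.val * (y * x ^ j.val) = y * x ^ i.val * y * x ^ j.val from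
      (mul_assoc _ _ _).symm, conj_pow_val hy hc]

def toHom (hx : x ^ m = 1) (hy : y * y = 1) (hc : y * x * y = x⁻¹) :
    DihedralGroup m →* DihedralGroup n where
  toFun := toHomFun x y
  map_one' := by
    show toHomFun x y (DihedralGroup.r 0) = 1
    simp [toHomFun]
  map_mul' := toHomFun_mul hx hy hc

def homEquiv (m n : ℕ) [NeZero m] :
    (DihedralGroup m →* DihedralGroup n) ≃
      {p : DihedralGroup n × DihedralGroup n // P m p.1 p.2} where
  toFun f := ⟨(f (DihedralGroup.r 1), f (DihedralGroup.sr 0)), by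
    refine ⟨?_, ?_, ?_⟩
    · rw [← map_pow, r_one_pow, ZMod.natCast_self, ← one_def, map_one]
    · rw [← map_mul, sr_mul_sr, sub_self, ← one_def, map_one]
    · rw [← map_mul, ← map_mul, ← map_inv]
      congr 1
      simp [r_inv]⟩
  invFun p := toHom p.2.1 p.2.2.1 p.2.2.2
  left_inv f := by
    ext a
    rcases a with i | i
    · show f (DihedralGroup.r 1) ^ i.val = f (DihedralGroup.r i)
      rw [← map_pow, r_one_pow]
      congr 1
      simp [ZMod.natCast_val, ZMod.cast_id]
    · show f (DihedralGroup.sr 0) * f (DihedralGroup.r 1) ^ i.val = f (DihedralGroup.sr i)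
      rw [← map_pow, r_one_pow, ← map_mul, sr_mul_r, zero_add]
      congr 1
      simp [ZMod.natCast_val, ZMod.cast_id]
  right_inv := by
    rintro ⟨⟨x, y⟩, hx, hy, hc⟩
    ext : 2
    · show toHomFun x y (DihedralGroup.r 1) = x
      show x ^ (1 : ZMod m).val = x
      have : (1 : ZMod m) = ((1 : ℕ) : ZMod m) := by norm_cast
      rw [this, ZMod.val_natCast, pow_mod_of_pow_eq_one hx, pow_one]
    · show toHomFun x y (DihedralGroup.sr 0) = y
      show y * x ^ (0 : ZMod m).val = y
      rw [ZMod.val_zero, pow_zero, mul_one]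

end Hom

section Count

variable [NeZero n]

lemma card_dihedral_subtype (p : DihedralGroup n → Prop) [DecidablePred p] :
    Fintype.card {y : DihedralGroup n // p y} =
      #(univ.filter fun i : ZMod n => p (DihedralGroup.r i)) +
      #(univ.filter fun i : ZMod n => p (DihedralGroup.sr i)) := by
  rw [Fintype.card_subtype, Finset.card_filter,
    ← Equiv.sum_comp (dihedralEquiv n) (fun y => if p y then 1 else 0),
    Fintype.sum_sum_type, Finset.card_filter, Finset.card_filter]
  rfl

lemma card_torsion (k : ℕ) (hk : k ≠ 0) :
    #(univ.filter fun i : ZMod n => (k : ZMod n) * i = 0) = Nat.gcd k n := by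
  classical
  have hcard : Fintype.card (ZMod n) = n := ZMod.card n
  have key : ∀ i : ZMod n, ((k : ZMod n) * i = 0 ↔ addOrderOf i ∣ Nat.gcd k n) := by
    intro i
    rw [← nsmul_eq_mul, ← addOrderOf_dvd_iff_nsmul_eq_zero]
    constructor
    · intro h
      refine Nat.dvd_gcd h (addOrderOf_dvd_iff_nsmul_eq_zero.mpr ?_)
      rw [nsmul_eq_mul, ZMod.natCast_self, zero_mul]
    · intro h
      exact h.trans (Nat.gcd_dvd_left k n)
  rw [show (univ.filter fun i : ZMod n => (k : ZMod n) * i = 0)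
      = univ.filter fun i : ZMod n => addOrderOf i ∣ Nat.gcd k n from
    Finset.filter_congr fun i _ => by simp [key i]]
  rw [Finset.card_eq_sum_card_fiberwise
    (f := fun i : ZMod n => addOrderOf i) (t := (Nat.gcd k n).divisors)
    (fun x hx => Nat.mem_divisors.mpr ⟨(mem_filter.mp hx).2, Nat.gcd_ne_zero_left hk⟩)]
  have : ∀ d ∈ (Nat.gcd k n).divisors,
      #((univ.filter fun i : ZMod n => addOrderOf i ∣ Nat.gcd k n).filter
        fun i => addOrderOf i = d) = Nat.totient d := by
    intro d hd
    rw [Finset.filter_filter]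
    rw [show (univ.filter fun i : ZMod n => addOrderOf i ∣ Nat.gcd k n ∧ addOrderOf i = d)
        = univ.filter fun i : ZMod n => addOrderOf i = d from
      Finset.filter_congr fun i _ => by
        constructor
        · exact fun h => h.2
        · exact fun h => ⟨h ▸ (Nat.mem_divisors.mp hd).1, h⟩]
    exact IsAddCyclic.card_addOrderOf_eq_totient
      (by rw [hcard]; exact ((Nat.mem_divisors.mp hd).1.trans (Nat.gcd_dvd_right k n)))
  rw [Finset.sum_congr rfl this, Nat.sum_totient]

lemma card_P_r_zero (hne : Even n) (m : ℕ) :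
    Fintype.card {y : DihedralGroup n // P m (DihedralGroup.r 0) y} = n + 2 := by
  rw [card_dihedral_subtype]
  have h1 : (univ.filter fun j : ZMod n => P m (DihedralGroup.r 0) (DihedralGroup.r j))
      = univ.filter fun j : ZMod n => ((2 : ℕ) : ZMod n) * j = 0 := by
    apply Finset.filter_congr
    intro j _
    constructor
    · rintro ⟨-, h2, -⟩
      rw [Nat.cast_ofNat, two_mul]
      simpa [one_def, -r_zero] using h2
    · intro h
      rw [Nat.cast_ofNat, two_mul] at h
      refine ⟨by simp [r_pow, one_def, -r_zero], by simp [one_def, h, -r_zero], ?_⟩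
      simp only [r_mul_r, add_zero, r_inv, neg_zero]
      exact congrArg _ h
  have h2 : (univ.filter fun j : ZMod n => P m (DihedralGroup.r 0) (DihedralGroup.sr j))
      = univ := by
    apply Finset.filter_true_of_mem
    intro j _
    refine ⟨by simp [r_pow, one_def, -r_zero], sr_mul_self j, ?_⟩
    simp only [sr_mul_r, sr_mul_sr, r_inv, neg_zero]
    congr 1
    ring
  rw [h1, h2, card_torsion 2 two_ne_zero, card_univ]
  rw [Nat.gcd_eq_left hne.two_dvd, ZMod.card]
  omega

lemma card_P_r_ne (hmo : Odd m) {i : ZMod n} (hi : i ≠ 0) (hmi : (m : ZMod n) * i = 0) :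
    Fintype.card {y : DihedralGroup n // P m (DihedralGroup.r i) y} = n := by
  rw [card_dihedral_subtype]
  have h1 : (univ.filter fun j : ZMod n => P m (DihedralGroup.r i) (DihedralGroup.r j)) = ∅ := by
    apply Finset.filter_false_of_mem
    intro j _
    rintro ⟨-, h2, h3⟩
    have hj : j + j = 0 := by simpa [one_def, -r_zero] using h2
    have hj2 : j + i + j = -i := by simpa [r_inv] using h3
    have hii : i + i = 0 := by
      rw [show j + i + j = j + j + i from by ring, hj, zero_add] at hj2
      linear_combination hj2
    have hdvd : addOrderOf i ∣ Nat.gcd m 2 := Nat.dvd_gcd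
      (addOrderOf_dvd_iff_nsmul_eq_zero.mpr (by rw [nsmul_eq_mul]; exact hmi))
      (addOrderOf_dvd_iff_nsmul_eq_zero.mpr (by rw [two_nsmul]; exact hii))
    have hg : Nat.gcd m 2 = 1 := by
      rcases (Nat.dvd_prime Nat.prime_two).mp (Nat.gcd_dvd_right m 2) with h | h
      · exact h
      · exfalso
        have h2m : 2 ∣ m := h ▸ Nat.gcd_dvd_left m 2
        have := Nat.odd_iff.mp hmo
        omega
    exact hi (AddMonoid.addOrderOf_eq_one_iff.mp (Nat.dvd_one.mp (hg ▸ hdvd)))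
  have h2 : (univ.filter fun j : ZMod n => P m (DihedralGroup.r i) (DihedralGroup.sr j))
      = univ := by
    apply Finset.filter_true_of_mem
    intro j _
    refine ⟨by rw [r_pow, hmi]; rfl, sr_mul_self j, ?_⟩
    simp only [sr_mul_r, sr_mul_sr, r_inv]
    congr 1
    ring
  rw [h1, h2, Finset.card_empty, card_univ, ZMod.card, zero_add]

end Count

end NumHomAux

open NumHomAux in
theorem numHom_odd_even (m n : ℕ) (hm : 0 < m) (hn : 0 < n) (hmo : Odd m) (hne : Even n) :
    Nat.card (DihedralGroup m →* DihedralGroup n) =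
      2 + n * ∑ k ∈ (Nat.gcd m n).divisors, Nat.totient k := by
  haveI : NeZero m := ⟨hm.ne'⟩
  haveI : NeZero n := ⟨hn.ne'⟩
  classical
  rw [Nat.card_congr (homEquiv m n), Nat.card_eq_fintype_card,
    Fintype.card_congr (Equiv.subtypeProdEquivSigmaSubtype (P m)), Fintype.card_sigma,
    ← Equiv.sum_comp (dihedralEquiv n)
      (fun x => Fintype.card {y : DihedralGroup n // P m x y}), Fintype.sum_sum_type]
  show ∑ a : ZMod n, Fintype.card {y : DihedralGroup n // P m (DihedralGroup.r a) y} +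
    ∑ a : ZMod n, Fintype.card {y : DihedralGroup n // P m (DihedralGroup.sr a) y} = _
  have hsr : ∀ i : ZMod n,
      Fintype.card {y : DihedralGroup n // P m (DihedralGroup.sr i) y} = 0 := by
    intro i
    refine Fintype.card_eq_zero_iff.mpr ⟨fun b => ?_⟩
    obtain ⟨y, h1, -, -⟩ := b
    have hsi : DihedralGroup.sr i ^ m = DihedralGroup.sr i := by
      rw [← pow_mod_orderOf, orderOf_sr, Nat.odd_iff.mp hmo, pow_one]
    rw [hsi] at h1
    exact absurd h1 (by simp [DihedralGroup.one_def, -r_zero])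
  rw [Finset.sum_congr rfl (fun i _ => hsr i), Finset.sum_const, smul_zero, add_zero]
  set c : ZMod n → ℕ :=
    fun i => Fintype.card {y : DihedralGroup n // P m (DihedralGroup.r i) y} with hc
  set S := univ.filter (fun i : ZMod n => (m : ZMod n) * i = 0) with hS
  have hzero : ∀ i ∈ univ, i ∉ S → c i = 0 := by
    intro i _ hiS
    have hni : ¬ ((m : ZMod n) * i = 0) := by simpa [hS] using hiS
    refine Fintype.card_eq_zero_iff.mpr ⟨fun b => ?_⟩
    obtain ⟨y, h1, -, -⟩ := b
    rw [NumHomAux.r_pow] at h1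
    exact hni (by simpa [DihedralGroup.one_def, -r_zero] using h1)
  rw [← Finset.sum_subset (Finset.subset_univ S) hzero]
  have h0S : (0 : ZMod n) ∈ S := by simp [hS]
  rw [← Finset.add_sum_erase _ c h0S]
  have hrest : ∀ i ∈ S.erase 0, c i = n := by
    intro i hi
    obtain ⟨hi0, hiS⟩ := Finset.mem_erase.mp hi
    exact card_P_r_ne hmo hi0 (by simpa [hS] using (Finset.mem_filter.mp hiS).2)
  rw [Finset.sum_congr rfl hrest, Finset.sum_const, smul_eq_mul,
    Finset.card_erase_of_mem h0S, show c 0 = n + 2 from card_P_r_zero hne m,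
    show S.card = Nat.gcd m n from card_torsion m hm.ne', Nat.sum_totient]
  have hgpos : 0 < Nat.gcd m n := Nat.gcd_pos_of_pos_left n hm
  rcases Nat.exists_eq_succ_of_ne_zero hgpos.ne' with ⟨g, hg⟩
  rw [hg]
  simp only [Nat.succ_sub_one, Nat.succ_eq_add_one]
  ring
end

section
/- For a positive even integer n, the number of group endomorphisms of the dihedral group D_n is (n + 2)². -/
namespace NEndAux

open DihedralGroup Finset

variable {n : ℕ}

theorem r_inv (i : ZMod n) : (r i)⁻¹ = r (-i) := rfl

theorem sr_inv (i : ZMod n) : (sr i)⁻¹ = sr i := rfl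

theorem r_pow (a : ZMod n) (k : ℕ) : (r a) ^ k = r ((k : ZMod n) * a) := by
  induction k with
  | zero => simp
  | succ k ih => rw [pow_succ, ih, r_mul_r]; congr 1; push_cast; ring

theorem pow_n_eq_one (hne : Even n) (x : DihedralGroup n) : x ^ n = 1 := by
  cases x with
  | r a => rw [r_pow, ZMod.natCast_self, zero_mul, one_def]
  | sr a =>
      have h : sr a ^ n = (sr a ^ 2) ^ (n / 2) := by
        rw [← pow_mul]
        congr 1
        obtain ⟨m, hm⟩ := hne
        omega
      rw [h, sq, sr_mul_self, one_pow]

theorem pow_cong {x : DihedralGroup n} (hx : x ^ n = 1) {a b : ℕ}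
    (h : (a : ZMod n) = (b : ZMod n)) : x ^ a = x ^ b := by
  rw [pow_eq_pow_mod a hx, pow_eq_pow_mod b hx]
  rw [ZMod.natCast_eq_natCast_iff] at h
  rw [h]

theorem inv_pow_mul [NeZero n] {x : DihedralGroup n} (hx : x ^ n = 1) (i j : ZMod n) :
    x⁻¹ ^ i.val * x ^ j.val = x ^ (j - i).val := by
  rw [inv_pow, inv_mul_eq_iff_eq_mul, ← pow_add]
  exact pow_cong hx (by push_cast [ZMod.natCast_zmod_val]; ring)

theorem pow_mul_y {x y : DihedralGroup n} (hy2 : y * y = 1) (hyxy : y * x * y = x⁻¹) (k : ℕ) :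
    x ^ k * y = y * x⁻¹ ^ k := by
  have hxy : x * y = y * x⁻¹ := by
    calc x * y = y * y * (x * y) := by rw [hy2, one_mul]
    _ = y * (y * x * y) := by simp [mul_assoc]
    _ = y * x⁻¹ := by rw [hyxy]
  induction k with
  | zero => simp
  | succ k ih =>
      rw [pow_succ, pow_succ, mul_assoc, hxy, ← mul_assoc, ih, mul_assoc]

/-- The function underlying the lift. -/
def liftFun (x y : DihedralGroup n) : DihedralGroup n → DihedralGroup n
  | r i => x ^ i.val
  | sr i => y * x ^ i.val

/-- The homomorphism determined by images of `r 1` and `sr 0`. -/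
def lift [NeZero n] (x y : DihedralGroup n) (hx : x ^ n = 1) (hy2 : y * y = 1)
    (hyxy : y * x * y = x⁻¹) : DihedralGroup n →* DihedralGroup n where
  toFun := liftFun x y
  map_one' := by
    show liftFun x y (r 0) = 1
    simp [liftFun]
  map_mul' := by
    have hc := pow_mul_y hy2 hyxy
    have hs := inv_pow_mul (n := n) hx
    rintro (i | i) (j | j)
    · show liftFun x y (r (i + j)) = x ^ i.val * x ^ j.val
      show x ^ (i + j).val = x ^ i.val * x ^ j.val
      rw [← pow_add]
      exact pow_cong hx (by push_cast [ZMod.natCast_zmod_val]; ring)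
    · show liftFun x y (sr (j - i)) = x ^ i.val * (y * x ^ j.val)
      show y * x ^ (j - i).val = x ^ i.val * (y * x ^ j.val)
      rw [← hs i j, ← mul_assoc, ← mul_assoc, ← hc, mul_assoc]
    · show liftFun x y (sr (i + j)) = y * x ^ i.val * x ^ j.val
      show y * x ^ (i + j).val = y * x ^ i.val * x ^ j.val
      rw [mul_assoc, ← pow_add]
      congr 1
      exact pow_cong hx (by push_cast [ZMod.natCast_zmod_val]; ring)
    · show liftFun x y (r (j - i)) = (y * x ^ i.val) * (y * x ^ j.val)
      show x ^ (j - i).val = (y * x ^ i.val) * (y * x ^ j.val)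
      rw [← hs i j, mul_assoc, ← mul_assoc (x ^ i.val), hc, ← mul_assoc, ← mul_assoc, hy2,
        one_mul]

/-- The parameter space. -/
abbrev S (n : ℕ) : Type :=
  {p : DihedralGroup n × DihedralGroup n // p.2 * p.2 = 1 ∧ p.2 * p.1 * p.2 = p.1⁻¹}

theorem determined [NeZero n] (f : DihedralGroup n →* DihedralGroup n) (g : DihedralGroup n) :
    f g = liftFun (f (r 1)) (f (sr 0)) g := by
  cases g with
  | r i =>
      show f (r i) = f (r 1) ^ i.val
      rw [← map_pow, r_one_pow, ZMod.natCast_zmod_val]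
  | sr i =>
      show f (sr i) = f (sr 0) * f (r 1) ^ i.val
      rw [← map_pow, r_one_pow, ZMod.natCast_zmod_val, ← map_mul, sr_mul_r, zero_add]

/-- The equivalence between endomorphisms and the parameter space. -/
noncomputable def endEquiv (hn2 : 1 < n) (hne : Even n) :
    haveI : NeZero n := ⟨by omega⟩
    (DihedralGroup n →* DihedralGroup n) ≃ S n := by
  haveI : NeZero n := ⟨by omega⟩
  refine
  { toFun := fun f => ⟨(f (r 1), f (sr 0)), ?_, ?_⟩
    invFun := fun p => lift p.1.1 p.1.2 (pow_n_eq_one hne _) p.2.1 p.2.2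
    left_inv := ?_
    right_inv := ?_ }
  · rw [← map_mul, sr_mul_self, map_one]
  · rw [← map_mul, ← map_mul, sr_mul_r, zero_add, sr_mul_sr, ← map_inv, r_inv, zero_sub]
  · intro f
    ext g
    exact (determined f g).symm
  · rintro ⟨⟨x, y⟩, h1, h2⟩
    have hv1 : (1 : ZMod n).val = 1 := by
      haveI : Fact (1 < n) := ⟨hn2⟩
      exact ZMod.val_one n
    apply Subtype.ext
    show (liftFun x y (r 1), liftFun x y (sr 0)) = (x, y)
    show (x ^ (1 : ZMod n).val, y * x ^ (0 : ZMod n).val) = (x, y)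
    rw [hv1, ZMod.val_zero, pow_one, pow_zero, mul_one]

/-- Splitting a count over the dihedral group into rotations and reflections. -/
def dEquiv : ZMod n ⊕ ZMod n ≃ DihedralGroup n where
  toFun s := match s with | .inl j => r j | .inr j => sr j
  invFun g := match g with | r j => .inl j | sr j => .inr j
  left_inv := by rintro (x | x) <;> rfl
  right_inv := by rintro (x | x) <;> rfl

theorem sum_dihedral [NeZero n] (F : DihedralGroup n → ℕ) :
    ∑ g, F g = (∑ a, F (r a)) + ∑ a, F (sr a) := by
  rw [← Fintype.sum_equiv dEquiv (fun s => F (dEquiv s)) F (fun _ => rfl),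
    Fintype.sum_sum_type]
  rfl

theorem card_split [NeZero n] (Q : DihedralGroup n → Prop) [DecidablePred Q] :
    (univ.filter Q).card =
      (univ.filter fun a : ZMod n => Q (r a)).card +
        (univ.filter fun a : ZMod n => Q (sr a)).card := by
  rw [card_filter, card_filter, card_filter, sum_dihedral (fun g => if Q g then 1 else 0)]

theorem two_tor [NeZero n] (hn : 0 < n) (hne : Even n) (d : ZMod n) :
    d + d = 0 ↔ d = 0 ∨ d = ((n / 2 : ℕ) : ZMod n) := by
  have hhalf : n / 2 + n / 2 = n := by obtain ⟨m, hm⟩ := hne; omega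
  constructor
  · intro h
    have h2 : ((d.val + d.val : ℕ) : ZMod n) = 0 := by
      push_cast [ZMod.natCast_zmod_val]
      exact h
    rw [ZMod.natCast_eq_zero_iff] at h2
    obtain ⟨k, hk⟩ := h2
    have hlt := ZMod.val_lt d
    have hk2 : k < 2 := by
      by_contra hge
      have : n * 2 ≤ n * k := Nat.mul_le_mul_left n (by omega)
      omega
    interval_cases k
    · left
      rw [← ZMod.val_eq_zero]
      omega
    · right
      have : d.val = n / 2 := by omega
      rw [← ZMod.natCast_zmod_val d, this]
  · rintro (rfl | rfl)
    · simp
    · rw [← Nat.cast_add, hhalf, ZMod.natCast_self]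

theorem card_two [NeZero n] (hn : 0 < n) (hne : Even n) (c : ZMod n) :
    (univ.filter fun b : ZMod n => b + b = c + c).card = 2 := by
  have hn2 : 2 ≤ n := Nat.le_of_dvd hn hne.two_dvd
  have hmne : ((n / 2 : ℕ) : ZMod n) ≠ 0 := by
    rw [ne_eq, ZMod.natCast_eq_zero_iff]
    intro hdvd
    have := Nat.le_of_dvd (by omega) hdvd
    omega
  have hset : (univ.filter fun b : ZMod n => b + b = c + c)
      = {c, c + ((n / 2 : ℕ) : ZMod n)} := by
    ext b
    simp only [mem_filter, mem_univ, true_and, mem_insert, mem_singleton]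
    constructor
    · intro h
      have hd : (b - c) + (b - c) = 0 := by linear_combination h
      rcases (two_tor hn hne _).mp hd with h0 | h1
      · left; linear_combination h0
      · right; linear_combination h1
    · have hm : ((n / 2 : ℕ) : ZMod n) + ((n / 2 : ℕ) : ZMod n) = 0 := by
        rw [← Nat.cast_add]
        rw [show n / 2 + n / 2 = n by obtain ⟨m, hm⟩ := hne; omega, ZMod.natCast_self]
      rintro (rfl | rfl)
      · rfl
      · linear_combination hm
  rw [hset, card_insert_of_notMem (by simp [eq_comm, hmne]), card_singleton]

theorem card_two_zero [NeZero n] (hn : 0 < n) (hne : Even n) :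
    (univ.filter fun b : ZMod n => b + b = 0).card = 2 := by
  have := card_two hn hne 0
  simpa using this

end NEndAux

theorem numEnd_even (n : ℕ) (hn : 0 < n) (hne : Even n) :
    Nat.card (DihedralGroup n →* DihedralGroup n) = (n + 2) ^ 2 := by
  classical
  open DihedralGroup Finset NEndAux in
  haveI : NeZero n := ⟨hn.ne'⟩
  have hn2 : 1 < n := lt_of_lt_of_le one_lt_two (Nat.le_of_dvd hn hne.two_dvd)
  rw [Nat.card_congr (NEndAux.endEquiv hn2 hne), Nat.card_eq_fintype_card,
    Fintype.card_subtype]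
  have hprod : (univ.filter fun p : DihedralGroup n × DihedralGroup n =>
        p.2 * p.2 = 1 ∧ p.2 * p.1 * p.2 = p.1⁻¹).card
      = ∑ x : DihedralGroup n,
          (univ.filter fun y : DihedralGroup n => y * y = 1 ∧ y * x * y = x⁻¹).card := by
    rw [card_filter, Fintype.sum_prod_type]
    exact Finset.sum_congr rfl fun x _ => (card_filter _ _).symm
  rw [hprod, sum_dihedral]
  -- rotations: for each a, count = n + (if a + a = 0 then 2 else 0)
  have hrot : ∀ a : ZMod n,
      (univ.filter fun y : DihedralGroup n => y * y = 1 ∧ y * r a * y = (r a)⁻¹).card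
        = n + (if a + a = 0 then 2 else 0) := by
    intro a
    rw [card_split]
    have h1 : (univ.filter fun b : ZMod n =>
        r b * r b = 1 ∧ r b * r a * r b = (r a)⁻¹).card = if a + a = 0 then 2 else 0 := by
      have hiff : ∀ b : ZMod n,
          (r b * r b = 1 ∧ r b * r a * r b = (r a)⁻¹) ↔ (b + b = 0 ∧ a + a = 0) := by
        intro b
        rw [r_mul_r, r_mul_r, r_mul_r, one_def, r_inv, r.injEq, r.injEq]
        constructor
        · rintro ⟨h1, h2⟩
          exact ⟨h1, by linear_combination h2 - h1⟩
        · rintro ⟨h1, h2⟩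
          exact ⟨h1, by linear_combination h1 + h2⟩
      rw [filter_congr (fun b _ => by rw [hiff b])]
      by_cases h : a + a = 0
      · simp only [h, and_true, if_pos]
        exact card_two_zero hn hne
      · simp [h]
    have h2 : (univ.filter fun b : ZMod n =>
        sr b * sr b = 1 ∧ sr b * r a * sr b = (r a)⁻¹).card = n := by
      have hiff : ∀ b : ZMod n,
          (sr b * sr b = 1 ∧ sr b * r a * sr b = (r a)⁻¹) ↔ True := by
        intro b
        simp only [iff_true]
        refine ⟨sr_mul_self b, ?_⟩
        rw [sr_mul_r, sr_mul_sr, r_inv, r.injEq]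
        ring
      rw [filter_congr (fun b _ => by rw [hiff b]), filter_true_of_mem (fun _ _ => trivial),
        card_univ, ZMod.card]
    rw [h1, h2]
    ring
  -- reflections: for each a, count = 4
  have href : ∀ a : ZMod n,
      (univ.filter fun y : DihedralGroup n => y * y = 1 ∧ y * sr a * y = (sr a)⁻¹).card = 4 := by
    intro a
    rw [card_split]
    have h1 : (univ.filter fun b : ZMod n =>
        r b * r b = 1 ∧ r b * sr a * r b = (sr a)⁻¹).card = 2 := by
      have hiff : ∀ b : ZMod n,
          (r b * r b = 1 ∧ r b * sr a * r b = (sr a)⁻¹) ↔ b + b = 0 := by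
        intro b
        rw [r_mul_r, r_mul_sr, sr_mul_r, one_def, sr_inv, r.injEq, sr.injEq]
        constructor
        · rintro ⟨h1, _⟩; exact h1
        · intro h1; exact ⟨h1, by ring⟩
      rw [filter_congr (fun b _ => by rw [hiff b])]
      exact card_two_zero hn hne
    have h2 : (univ.filter fun b : ZMod n =>
        sr b * sr b = 1 ∧ sr b * sr a * sr b = (sr a)⁻¹).card = 2 := by
      have hiff : ∀ b : ZMod n,
          (sr b * sr b = 1 ∧ sr b * sr a * sr b = (sr a)⁻¹) ↔ b + b = a + a := by
        intro b
        constructor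
        · rintro ⟨_, h2⟩
          rw [sr_mul_sr, r_mul_sr, sr_inv, sr.injEq] at h2
          linear_combination h2
        · intro h
          refine ⟨sr_mul_self b, ?_⟩
          rw [sr_mul_sr, r_mul_sr, sr_inv, sr.injEq]
          linear_combination h
      rw [filter_congr (fun b _ => by rw [hiff b])]
      exact card_two hn hne a
    rw [h1, h2]
  rw [Finset.sum_congr rfl fun a _ => hrot a, Finset.sum_congr rfl fun a _ => href a]
  rw [Finset.sum_add_distrib, Finset.sum_const, Finset.sum_const, card_univ, ZMod.card,
    smul_eq_mul, smul_eq_mul]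
  have hsum : (∑ a : ZMod n, if a + a = 0 then 2 else 0)
      = 2 * (univ.filter fun a : ZMod n => a + a = 0).card := by
    rw [Finset.card_filter, Finset.mul_sum]
    exact Finset.sum_congr rfl fun a _ => by split <;> simp
  rw [hsum, card_two_zero hn hne]
  ring
end

section
/- Let m be a positive even integer and n a positive odd integer. The number of group homomorphisms from D_m into D_n is 1 + 2n + n·(∑_{k | gcd(m,n)} φ(k)). -/
open DihedralGroup

namespace DihedralHomCount

/-- powers of `r`. -/
lemma r_pow {n : ℕ} (j : ZMod n) (k : ℕ) :
    (r j : DihedralGroup n) ^ k = r ((k : ZMod n) * j) := by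
  induction k with
  | zero => simp
  | succ k ih => rw [pow_succ, ih, r_mul_r]; push_cast; ring_nf

lemma pow_val_add {m : ℕ} [NeZero m] {G : Type*} [Group G] {a : G} (ha : a ^ m = 1)
    (x y : ZMod m) : a ^ (x + y).val = a ^ x.val * a ^ y.val := by
  rw [← pow_add, pow_eq_pow_iff_modEq]
  have hd : orderOf a ∣ m := orderOf_dvd_of_pow_eq_one ha
  refine Nat.ModEq.of_dvd hd ?_
  rw [ZMod.val_add]
  exact (Nat.mod_modEq _ m)

lemma semiconj {G : Type*} [Group G] {a b : G} (hb : b * b = 1) (hc : b * a * b = a⁻¹) (k : ℕ) :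
    b * a ^ k = (a ^ k)⁻¹ * b := by
  have hba : b * a = a⁻¹ * b := by
    have := congrArg (· * b) hc
    simpa [mul_assoc, hb] using this
  have := (SemiconjBy.pow_right hba k)
  rwa [inv_pow] at this

/-- Construct a homomorphism `DihedralGroup m →* DihedralGroup n` from a pair
satisfying the dihedral relations. -/
def mkHom {m n : ℕ} [NeZero m] (a b : DihedralGroup n) (ha : a ^ m = 1) (hb : b * b = 1)
    (hc : b * a * b = a⁻¹) : DihedralGroup m →* DihedralGroup n where
  toFun x := match x with
    | .r i => a ^ i.val
    | .sr i => b * a ^ i.val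
  map_one' := by
    show a ^ (0 : ZMod m).val = 1
    simp [ZMod.val_zero]
  map_mul' := by
    have key : ∀ i j : ZMod m, a ^ ((i + j).val) = a ^ i.val * a ^ j.val := pow_val_add ha
    have h' : ∀ k : ℕ, a ^ k * b = b * (a ^ k)⁻¹ := by
      intro k
      have h := semiconj hb hc k
      rw [eq_mul_inv_iff_mul_eq, mul_assoc, h, ← mul_assoc]
      simp
    have hb' : ∀ x : DihedralGroup n, b * (b * x) = x := fun x => by
      rw [← mul_assoc, hb, one_mul]
    rintro (i | i) (j | j)
    · exact key i j
    · show b * a ^ ((j - i).val) = a ^ i.val * (b * a ^ j.val)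
      have h1 : a ^ ((j - i + i).val) = a ^ (j - i).val * a ^ i.val := key _ _
      rw [sub_add_cancel] at h1
      rw [← mul_assoc, h' i.val, h1]
      group
    · show b * a ^ ((i + j).val) = (b * a ^ i.val) * a ^ j.val
      rw [key i j, mul_assoc]
    · show a ^ ((j - i).val) = (b * a ^ i.val) * (b * a ^ j.val)
      have h1 : a ^ ((j - i + i).val) = a ^ (j - i).val * a ^ i.val := key _ _
      rw [sub_add_cancel] at h1
      rw [semiconj hb hc i.val, h1, mul_assoc _ b _, hb']
      group

/-- The homomorphisms correspond to pairs `(b, a)` satisfying the relations. -/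
def homEquiv (m n : ℕ) [NeZero m] (h1 : 1 < m) :
    (DihedralGroup m →* DihedralGroup n) ≃
      {p : DihedralGroup n × DihedralGroup n //
        p.2 ^ m = 1 ∧ p.1 * p.1 = 1 ∧ p.1 * p.2 * p.1 = p.2⁻¹} where
  toFun f := ⟨(f (.sr 0), f (.r 1)), by
    refine ⟨?_, ?_, ?_⟩
    · rw [← map_pow, r_one_pow, ZMod.natCast_self, ← one_def, map_one]
    · rw [← map_mul, sr_mul_sr, sub_self, ← one_def, map_one]
    · rw [← map_mul, ← map_mul, ← map_inv]
      congr 1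
      rw [sr_mul_r, zero_add, sr_mul_sr, zero_sub]
      rfl⟩
  invFun p := mkHom p.1.2 p.1.1 p.2.1 p.2.2.1 p.2.2.2
  left_inv f := by
    ext x
    cases x with
    | r i =>
      show f (.r 1) ^ i.val = f (.r i)
      rw [← map_pow, r_one_pow, ZMod.natCast_zmod_val]
    | sr i =>
      show f (.sr 0) * f (.r 1) ^ i.val = f (.sr i)
      rw [← map_pow, r_one_pow, ZMod.natCast_zmod_val, ← map_mul, sr_mul_r, zero_add]
  right_inv p := by
    refine Subtype.ext (Prod.ext ?_ ?_)
    · show p.1.1 * p.1.2 ^ (0 : ZMod m).val = p.1.1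
      simp [ZMod.val_zero]
    · show p.1.2 ^ (1 : ZMod m).val = p.1.2
      rw [ZMod.val_one_eq_one_mod, Nat.mod_eq_of_lt h1, pow_one]

/-- split a subtype of the dihedral group along the two constructors -/
def subtypeEquiv {n : ℕ} (Q : DihedralGroup n → Prop) :
    {x : DihedralGroup n // Q x} ≃ {j : ZMod n // Q (.r j)} ⊕ {j : ZMod n // Q (.sr j)} where
  toFun x := match x with
    | ⟨.r j, h⟩ => Sum.inl ⟨j, h⟩
    | ⟨.sr j, h⟩ => Sum.inr ⟨j, h⟩
  invFun y := match y with
    | Sum.inl ⟨j, h⟩ => ⟨.r j, h⟩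
    | Sum.inr ⟨j, h⟩ => ⟨.sr j, h⟩
  left_inv := by rintro ⟨(j | j), h⟩ <;> rfl
  right_inv := by rintro (⟨j, h⟩ | ⟨j, h⟩) <;> rfl

lemma nat_card_dihedral_subtype {n : ℕ} [NeZero n] (Q : DihedralGroup n → Prop) :
    Nat.card {x : DihedralGroup n // Q x}
      = Nat.card {j : ZMod n // Q (.r j)} + Nat.card {j : ZMod n // Q (.sr j)} := by
  rw [Nat.card_congr (subtypeEquiv Q), Nat.card_sum]

lemma two_mul_eq_zero_iff {n : ℕ} [NeZero n] (hno : Odd n) (t : ZMod n) :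
    t + t = 0 ↔ t = 0 := by
  constructor
  · intro h
    have h2 : ((2 * t.val : ℕ) : ZMod n) = 0 := by
      push_cast [ZMod.natCast_zmod_val]
      rw [two_mul]; exact h
    rw [ZMod.natCast_eq_zero_iff] at h2
    have hcop : Nat.Coprime n 2 := Nat.coprime_two_right.mpr hno
    have hdvd : n ∣ t.val := hcop.dvd_of_dvd_mul_left h2
    have hv : t.val = 0 := Nat.eq_zero_of_dvd_of_lt hdvd (ZMod.val_lt t)
    rw [← ZMod.natCast_zmod_val t, hv, Nat.cast_zero]
  · rintro rfl; exact add_zero 0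

/-- counting `m`-torsion in `ZMod n`. -/
lemma card_torsion (m n : ℕ) [NeZero n] (hm : 0 < m) :
    Nat.card {j : ZMod n // (m : ZMod n) * j = 0} = Nat.gcd m n := by
  have hn : 0 < n := Nat.pos_of_ne_zero (NeZero.ne n)
  set g := Nat.gcd m n with hg
  have hgpos : 0 < g := Nat.gcd_pos_of_pos_left n hm
  have hgn : g ∣ n := Nat.gcd_dvd_right m n
  have hgm : g ∣ m := Nat.gcd_dvd_left m n
  set d := n / g with hd
  have hdg : d * g = n := Nat.div_mul_cancel hgn
  have hdpos : 0 < d := Nat.div_pos (Nat.le_of_dvd hn hgn) hgpos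
  have hcond : ∀ j : ZMod n, ((m : ZMod n) * j = 0 ↔ d ∣ j.val) := by
    intro j
    rw [show (m : ZMod n) * j = ((m * j.val : ℕ) : ZMod n) by
      push_cast [ZMod.natCast_zmod_val]; ring, ZMod.natCast_eq_zero_iff]
    constructor
    · intro h
      -- n ∣ m * j.val → d ∣ j.val
      have h2 : d * g ∣ (m / g) * g * j.val := by
        rw [hdg, Nat.div_mul_cancel hgm]; exact h
      have h3 : d ∣ (m / g) * j.val := by
        have := (mul_dvd_mul_iff_right (a := d) (b := (m/g) * j.val) hgpos.ne').mp ?_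
        · exact this
        · calc d * g ∣ (m / g) * g * j.val := h2
            _ = (m / g) * j.val * g := by ring
      have hcop : Nat.Coprime d (m / g) := by
        rw [hd, hg, Nat.coprime_comm]
        exact Nat.coprime_div_gcd_div_gcd hgpos
      exact (Nat.Coprime.dvd_of_dvd_mul_left hcop h3)
    · rintro ⟨c, hc⟩
      refine ⟨(m / g) * c, ?_⟩
      rw [hc]
      calc m * (d * c) = (m / g) * g * (d * c) := by rw [Nat.div_mul_cancel hgm]
        _ = (g * d) * ((m / g) * c) := by ring
        _ = n * ((m / g) * c) := by rw [mul_comm g d, hdg]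
  have : {j : ZMod n // (m : ZMod n) * j = 0} ≃ Fin g := by
    refine Equiv.symm ⟨fun i => ⟨((d * i : ℕ) : ZMod n), ?_⟩, fun j => ⟨j.1.val / d, ?_⟩, ?_, ?_⟩
    · rw [hcond]
      rw [ZMod.val_natCast, Nat.mod_eq_of_lt]
      · exact Dvd.intro _ rfl
      · calc d * i.1 < d * g := mul_lt_mul_of_pos_left i.2 hdpos
          _ = n := hdg
    · have hlt : j.1.val < d * g := by rw [hdg]; exact ZMod.val_lt j.1
      exact Nat.div_lt_of_lt_mul hlt
    · rintro ⟨i, hi⟩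
      apply Fin.ext
      show (((d * i : ℕ) : ZMod n)).val / d = i
      rw [ZMod.val_natCast, Nat.mod_eq_of_lt, Nat.mul_div_cancel_left _ hdpos]
      calc d * i < d * g := mul_lt_mul_of_pos_left hi hdpos
        _ = n := hdg
    · rintro ⟨j, hj⟩
      apply Subtype.ext
      show ((d * (j.val / d) : ℕ) : ZMod n) = j
      rw [Nat.mul_div_cancel' ((hcond j).mp hj), ZMod.natCast_zmod_val]
  rw [Nat.card_congr this, Nat.card_eq_fintype_card, Fintype.card_fin]

end DihedralHomCount

namespace DihedralHomCount

/-- The sum over the dihedral group splits along the two constructors. -/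
def sumEquiv (n : ℕ) : (ZMod n) ⊕ (ZMod n) ≃ DihedralGroup n where
  toFun i := match i with
    | Sum.inl j => .r j
    | Sum.inr j => .sr j
  invFun i := match i with
    | .r j => Sum.inl j
    | .sr j => Sum.inr j
  left_inv := by rintro (x | x) <;> rfl
  right_inv := by rintro (x | x) <;> rfl

lemma sum_dihedral {n : ℕ} [NeZero n] {M : Type*} [AddCommMonoid M] (f : DihedralGroup n → M) :
    ∑ x, f x = (∑ j : ZMod n, f (.r j)) + ∑ j : ZMod n, f (.sr j) := by
  rw [← (sumEquiv n).sum_comp f, Fintype.sum_sum_type]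
  congr 1

lemma sr_pow_even {n m : ℕ} (hme : Even m) (u : ZMod n) : (sr u : DihedralGroup n) ^ m = 1 := by
  obtain ⟨k, rfl⟩ := hme
  rw [← two_mul, pow_mul, sq, sr_mul_self, one_pow]

lemma card_r_case (m n : ℕ) [NeZero n] (hme : Even m) (hno : Odd n) (t : ZMod n) :
    Nat.card {a : DihedralGroup n //
        a ^ m = 1 ∧ (r t) * (r t) = 1 ∧ (r t) * a * (r t) = a⁻¹} =
      if t = 0 then n + 1 else 0 := by
  split_ifs with ht
  · subst ht
    rw [nat_card_dihedral_subtype]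
    have h1 : ∀ j : ZMod n,
        ((r j : DihedralGroup n) ^ m = 1 ∧ (r 0) * (r 0) = (1 : DihedralGroup n) ∧
          (r 0) * (r j) * (r 0) = (r j)⁻¹) ↔ j = 0 := by
      intro j
      constructor
      · rintro ⟨-, -, h3⟩
        rw [r_mul_r, r_mul_r, show ((r j : DihedralGroup n))⁻¹ = r (-j) from rfl] at h3
        have h := DihedralGroup.r.inj h3
        rw [← two_mul_eq_zero_iff hno]
        linear_combination h
      · rintro rfl
        refine ⟨?_, ?_, ?_⟩
        · rw [← one_def, one_pow]
        · rw [r_mul_r, add_zero, ← one_def]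
        · rw [r_mul_r, r_mul_r, add_zero, zero_add, ← one_def, inv_one]
    have h2 : ∀ j : ZMod n,
        ((sr j : DihedralGroup n) ^ m = 1 ∧ (r 0) * (r 0) = (1 : DihedralGroup n) ∧
          (r 0) * (sr j) * (r 0) = (sr j)⁻¹) := by
      intro j
      refine ⟨sr_pow_even hme j, by rw [r_mul_r, add_zero, ← one_def], ?_⟩
      rw [r_mul_sr, sub_zero, sr_mul_r, add_zero]
      rfl
    rw [Nat.card_congr (Equiv.subtypeEquivRight h1),
      Nat.card_congr (Equiv.subtypeUnivEquiv h2)]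
    rw [Nat.card_eq_fintype_card, Nat.card_eq_fintype_card, Fintype.card_subtype_eq,
      ZMod.card, add_comm]
  · haveI : IsEmpty {a : DihedralGroup n //
        a ^ m = 1 ∧ (r t) * (r t) = 1 ∧ (r t) * a * (r t) = a⁻¹} := by
      refine ⟨fun x => ht ?_⟩
      have h2 := x.2.2.1
      rw [r_mul_r, one_def] at h2
      exact (two_mul_eq_zero_iff hno t).mp (DihedralGroup.r.inj h2)
    exact Nat.card_of_isEmpty

lemma card_sr_case (m n : ℕ) [NeZero n] (hm : 0 < m) (hme : Even m) (hno : Odd n) (t : ZMod n) :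
    Nat.card {a : DihedralGroup n //
        a ^ m = 1 ∧ (sr t) * (sr t) = 1 ∧ (sr t) * a * (sr t) = a⁻¹} =
      Nat.gcd m n + 1 := by
  rw [nat_card_dihedral_subtype]
  have h1 : ∀ j : ZMod n,
      ((r j : DihedralGroup n) ^ m = 1 ∧ (sr t) * (sr t) = (1 : DihedralGroup n) ∧
        (sr t) * (r j) * (sr t) = (r j)⁻¹) ↔ (m : ZMod n) * j = 0 := by
    intro j
    constructor
    · rintro ⟨h, -, -⟩
      rw [r_pow, one_def] at h
      exact DihedralGroup.r.inj h
    · intro h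
      refine ⟨by rw [r_pow, h, one_def], sr_mul_self t, ?_⟩
      rw [sr_mul_r, sr_mul_sr, show ((r j : DihedralGroup n))⁻¹ = r (-j) from rfl]
      congr 1
      ring
  have h2 : ∀ u : ZMod n,
      ((sr u : DihedralGroup n) ^ m = 1 ∧ (sr t) * (sr t) = (1 : DihedralGroup n) ∧
        (sr t) * (sr u) * (sr t) = (sr u)⁻¹) ↔ u = t := by
    intro u
    constructor
    · rintro ⟨-, -, h3⟩
      rw [sr_mul_sr, r_mul_sr, show ((sr u : DihedralGroup n))⁻¹ = sr u from rfl] at h3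
      have h4 := DihedralGroup.sr.inj h3
      have h5 : (t - u) + (t - u) = 0 := by linear_combination h4
      have h6 := (two_mul_eq_zero_iff hno _).mp h5
      rw [← sub_eq_zero]
      linear_combination -h6
    · rintro rfl
      refine ⟨sr_pow_even hme u, sr_mul_self u, ?_⟩
      rw [sr_mul_sr, r_mul_sr, sub_self, sub_zero]
      rfl
  rw [Nat.card_congr (Equiv.subtypeEquivRight h1), Nat.card_congr (Equiv.subtypeEquivRight h2),
    card_torsion m n hm, Nat.card_eq_fintype_card, Fintype.card_subtype_eq]

end DihedralHomCount

open DihedralHomCount in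
theorem numHom_even_odd (m n : ℕ) (hm : 0 < m) (hn : 0 < n) (hme : Even m) (hno : Odd n) :
    Nat.card (DihedralGroup m →* DihedralGroup n) =
      1 + 2 * n + n * ∑ k ∈ (Nat.gcd m n).divisors, Nat.totient k := by
  haveI : NeZero m := ⟨hm.ne'⟩
  haveI : NeZero n := ⟨hn.ne'⟩
  have h1m : 1 < m := by
    obtain ⟨k, hk⟩ := hme
    omega
  rw [Nat.card_congr (homEquiv m n h1m),
    Nat.card_congr (Equiv.subtypeProdEquivSigmaSubtype
      (fun b a : DihedralGroup n => a ^ m = 1 ∧ b * b = 1 ∧ b * a * b = a⁻¹)),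
    Nat.card_eq_fintype_card, Fintype.card_sigma]
  simp_rw [← Nat.card_eq_fintype_card]
  rw [sum_dihedral (fun b => Nat.card
      {a : DihedralGroup n // a ^ m = 1 ∧ b * b = 1 ∧ b * a * b = a⁻¹})]
  have e1 : ∑ j : ZMod n, Nat.card
      {a : DihedralGroup n // a ^ m = 1 ∧ (r j) * (r j) = 1 ∧ (r j) * a * (r j) = a⁻¹} = n + 1 := by
    simp_rw [card_r_case m n hme hno]
    simp
  have e2 : ∑ j : ZMod n, Nat.card
      {a : DihedralGroup n // a ^ m = 1 ∧ (sr j) * (sr j) = 1 ∧ (sr j) * a * (sr j) = a⁻¹}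
      = n * (Nat.gcd m n + 1) := by
    simp_rw [card_sr_case m n hm hme hno]
    simp [Finset.sum_const, ZMod.card, mul_comm]
  rw [e1, e2, Nat.sum_totient]
  ring
end

section
/- Let m be a positive odd integer and n a positive even integer with gcd(m,n) = 1. The number of group homomorphisms from D_m into D_n is n + 2. -/
open DihedralGroup

/-- The homomorphism sending all rotations to 1 and all reflections to a fixed
involution `x`. -/
def homOfInv {m n : ℕ} (x : DihedralGroup n) (hx : x * x = 1) :
    DihedralGroup m →* DihedralGroup n where
  toFun := fun g => match g with
    | r _ => 1
    | sr _ => x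
  map_one' := rfl
  map_mul' := by rintro (a | a) (b | b) <;> simp [hx]

theorem numHom_odd_even_coprime (m n : ℕ) (hm : 0 < m) (hn : 0 < n) (hmo : Odd m) (hne : Even n)
    (hcop : Nat.gcd m n = 1) :
    Nat.card (DihedralGroup m →* DihedralGroup n) = n + 2 := by
  have : NeZero n := ⟨hn.ne'⟩
  have : NeZero m := ⟨hm.ne'⟩
  -- every hom kills `r 1`
  have key : ∀ φ : DihedralGroup m →* DihedralGroup n, φ (r 1) = 1 := by
    intro φ
    have h1 : orderOf (φ (r 1)) ∣ m := by
      rw [orderOf_dvd_iff_pow_eq_one, ← map_pow, r_one_pow]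
      rw [show ((m : ZMod m)) = 0 from ZMod.natCast_self m]
      exact map_one φ
    have h2 : orderOf (φ (r 1)) ∣ 2 * n := by
      have := orderOf_dvd_card (x := φ (r 1))
      rwa [DihedralGroup.card] at this
    have hc : Nat.Coprime m (2 * n) := by
      exact Nat.Coprime.mul_right hmo.coprime_two_right hcop
    have : orderOf (φ (r 1)) ∣ 1 := hc ▸ Nat.dvd_gcd h1 h2
    rwa [Nat.dvd_one, orderOf_eq_one_iff] at this
  have keyr : ∀ (φ : DihedralGroup m →* DihedralGroup n) (i : ZMod m), φ (r i) = 1 := by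
    intro φ i
    have : r i = (r 1 : DihedralGroup m) ^ i.val := by
      rw [r_one_pow, ZMod.natCast_zmod_val]
    rw [this, map_pow, key, one_pow]
  -- homs are classified by square roots of 1
  have e1 : (DihedralGroup m →* DihedralGroup n) ≃ {x : DihedralGroup n // x * x = 1} :=
    { toFun := fun φ => ⟨φ (sr 0), by rw [← map_mul, sr_mul_self, map_one]⟩
      invFun := fun x => homOfInv x.1 x.2
      left_inv := by
        intro φ
        ext g
        rcases g with i | i
        · exact (keyr φ i).symm
        · show φ (sr 0) = φ (sr i)
          have : sr i = sr (0 : ZMod m) * r i := by rw [sr_mul_r, zero_add]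
          rw [this, map_mul, keyr, mul_one]
      right_inv := fun x => rfl }
  -- square roots of 1 split into rotations and reflections
  have e2 : {x : DihedralGroup n // x * x = 1} ≃ {i : ZMod n // i + i = 0} ⊕ ZMod n :=
    { toFun := fun x => match x with
        | ⟨r i, h⟩ => Sum.inl ⟨i, by rwa [r_mul_r, one_def, r.injEq] at h⟩
        | ⟨sr i, _⟩ => Sum.inr i
      invFun := fun x => match x with
        | Sum.inl ⟨i, h⟩ => ⟨r i, by rw [r_mul_r, h, one_def]⟩
        | Sum.inr i => ⟨sr i, sr_mul_self i⟩
      left_inv := by rintro ⟨i | i, h⟩ <;> rfl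
      right_inv := by rintro (⟨i, h⟩ | i) <;> rfl }
  rw [Nat.card_congr (e1.trans e2), Nat.card_sum, Nat.card_zmod]
  -- count solutions of i + i = 0 in ZMod n
  obtain ⟨k, hk⟩ := hne
  have hkpos : 0 < k := by omega
  have hkn : k < n := by omega
  have hiff : ∀ i : ZMod n, i + i = 0 ↔ i = 0 ∨ i = (k : ℕ) := by
    intro i
    constructor
    · intro h
      have : ((i.val + i.val : ℕ) : ZMod n) = 0 := by
        push_cast [ZMod.natCast_zmod_val]; exact h
      rw [ZMod.natCast_eq_zero_iff] at this
      have hd : k ∣ i.val := by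
        obtain ⟨c, hc⟩ := this
        have hc' : i.val + i.val = k * c + k * c := by rw [hc, hk]; ring
        exact ⟨c, by omega⟩
      have hlt : i.val < n := ZMod.val_lt i
      obtain ⟨c, hc⟩ := hd
      have hc2 : c < 2 := lt_of_mul_lt_mul_left (by omega : k * c < k * 2) (Nat.zero_le k)
      interval_cases c
      · left; rw [← ZMod.natCast_zmod_val i, hc, mul_zero, Nat.cast_zero]
      · right; rw [← ZMod.natCast_zmod_val i, hc, mul_one]
    · rintro (rfl | rfl)
      · rw [add_zero]
      · rw [← Nat.cast_add, show k + k = n by omega, ZMod.natCast_self]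
  have hcard : Nat.card {i : ZMod n // i + i = 0} = 2 := by
    rw [Nat.card_eq_fintype_card, Fintype.card_subtype]
    have : Finset.univ.filter (fun i : ZMod n => i + i = 0) = {0, ((k : ℕ) : ZMod n)} := by
      ext i
      simp [hiff i]
    rw [this, Finset.card_pair]
    intro h
    have : ((k : ℕ) : ZMod n) = 0 := h.symm
    rw [ZMod.natCast_eq_zero_iff] at this
    exact absurd (Nat.le_of_dvd hkpos this) (by omega)
  rw [hcard]; ring
end

section
/- For positive integers m and n, the number of group homomorphisms from D_m to D_n that send the rotation generator of D_m into the rotation subgroup of D_n and send the reflection generator of D_m to a reflection of D_n equals n·(∑_{k | gcd(m,n)} φ(k)). -/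
open DihedralGroup

namespace CardHomAux

variable {m n : ℕ}

/-- The homomorphism `DihedralGroup m →* DihedralGroup n` determined by an additive
homomorphism `g : ZMod m →+ ZMod n` and `b : ZMod n`. -/
def mkHom (g : ZMod m →+ ZMod n) (b : ZMod n) : DihedralGroup m →* DihedralGroup n where
  toFun x := match x with
    | .r i => .r (g i)
    | .sr i => .sr (b + g i)
  map_one' := by
    show DihedralGroup.r (g 0) = 1
    rw [map_zero, one_def]
  map_mul' := by
    rintro (i | i) (j | j) <;>
      simp only [r_mul_r, r_mul_sr, sr_mul_r, sr_mul_sr, map_add, map_sub, r.injEq, sr.injEq] <;>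
      ring

theorem mkHom_r (g : ZMod m →+ ZMod n) (b : ZMod n) (i : ZMod m) :
    mkHom g b (.r i) = .r (g i) := rfl

theorem mkHom_sr (g : ZMod m →+ ZMod n) (b : ZMod n) (i : ZMod m) :
    mkHom g b (.sr i) = .sr (b + g i) := rfl

theorem card_addHom (m n : ℕ) (hm : 0 < m) (hn : 0 < n) :
    Nat.card (ZMod m →+ ZMod n) = Nat.gcd m n := by
  haveI : NeZero n := ⟨hn.ne'⟩
  -- reduce to counting `{a : ZMod n // (m : ZMod n) * a = 0}`
  have e1 : (ZMod m →+ ZMod n) ≃ {f : ℤ →+ ZMod n // f m = 0} := (ZMod.lift m).symm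
  have e2 : {f : ℤ →+ ZMod n // f m = 0} ≃ {a : ZMod n // (m : ZMod n) * a = 0} :=
    Equiv.subtypeEquiv (zmultiplesHom (ZMod n)).symm (by
      intro f
      simp only [zmultiplesHom_symm_apply]
      constructor
      · intro h
        have h2 : (m : ℤ) • f 1 = f ((m : ℤ) • (1 : ℤ)) := (map_zsmul f _ _).symm
        rw [smul_eq_mul, mul_one, h] at h2
        rw [zsmul_eq_mul, Int.cast_natCast] at h2
        simpa using h2
      · intro h
        have h2 : f ((m : ℤ)) = (m : ℤ) • f 1 := by
          rw [← map_zsmul f (m : ℤ) 1, smul_eq_mul, mul_one]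
        rw [h2, zsmul_eq_mul, Int.cast_natCast, h])
  -- the solution set is the kernel of left multiplication by `m`
  set f : ZMod n →+ ZMod n := AddMonoidHom.mulLeft (m : ZMod n) with hf
  have e3 : {a : ZMod n // (m : ZMod n) * a = 0} ≃ f.ker := by
    refine Equiv.subtypeEquivRight fun a => ?_
    simp [hf, AddMonoidHom.mem_ker]
  have hrange : f.range = AddSubgroup.zmultiples ((m : ℕ) : ZMod n) := by
    ext x
    simp only [AddMonoidHom.mem_range, AddSubgroup.mem_zmultiples_iff, hf,
      AddMonoidHom.coe_mulLeft]
    constructor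
    · rintro ⟨y, rfl⟩
      exact ⟨(y.val : ℤ), by
        rw [zsmul_eq_mul, Int.cast_natCast, ZMod.natCast_val, ZMod.cast_id, mul_comm]⟩
    · rintro ⟨k, rfl⟩
      exact ⟨((k : ℤ) : ZMod n), by rw [zsmul_eq_mul, mul_comm]⟩
  have hsplit : n = Nat.card (ZMod n ⧸ f.ker) * Nat.card f.ker := by
    have := AddSubgroup.card_eq_card_quotient_mul_card_addSubgroup f.ker
    rwa [Nat.card_zmod] at this
  set d := Nat.gcd n m with hd
  have hcard_range : Nat.card f.range = n / d := by
    rw [hrange, Nat.card_zmultiples, ZMod.addOrderOf_coe m hn.ne']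
  have hquot : Nat.card (ZMod n ⧸ f.ker) = n / d := by
    rw [Nat.card_congr (QuotientAddGroup.quotientKerEquivRange f).toEquiv, hcard_range]
  rw [Nat.card_congr (e1.trans (e2.trans e3))]
  have hdn : d ∣ n := Nat.gcd_dvd_left n m
  have hdpos : 0 < d := Nat.gcd_pos_of_pos_left m hn
  have hnd : 0 < n / d := Nat.div_pos (Nat.le_of_dvd hn hdn) hdpos
  rw [hquot] at hsplit
  have h1 : (n / d) * Nat.card f.ker = (n / d) * d := by
    rw [Nat.div_mul_cancel hdn]
    exact hsplit.symm
  have h2 : Nat.card f.ker = d := Nat.eq_of_mul_eq_mul_left hnd h1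
  rw [h2, hd, Nat.gcd_comm]

end CardHomAux

theorem card_hom_rot_to_rot_f_to_reflection (m n : ℕ) (hm : 0 < m) (hn : 0 < n) :
    Nat.card {ρ : DihedralGroup m →* DihedralGroup n //
        ρ (DihedralGroup.r 1) ∈ Subgroup.zpowers (DihedralGroup.r (1 : ZMod n)) ∧
        ∃ b : ZMod n, ρ (DihedralGroup.sr 0) = DihedralGroup.sr b} =
      n * ∑ k ∈ (Nat.gcd m n).divisors, Nat.totient k := by
  haveI : NeZero m := ⟨hm.ne'⟩
  haveI : NeZero n := ⟨hn.ne'⟩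
  set S := {ρ : DihedralGroup m →* DihedralGroup n //
        ρ (DihedralGroup.r 1) ∈ Subgroup.zpowers (DihedralGroup.r (1 : ZMod n)) ∧
        ∃ b : ZMod n, ρ (DihedralGroup.sr 0) = DihedralGroup.sr b} with hS
  have key : Nat.card ((ZMod m →+ ZMod n) × ZMod n) = Nat.card S := by
    apply Nat.card_eq_of_bijective
      (fun p => (⟨CardHomAux.mkHom p.1 p.2, ?_, ⟨p.2, ?_⟩⟩ : S))
    · constructor
      · rintro ⟨g, b⟩ ⟨g', b'⟩ h
        have h' : CardHomAux.mkHom g b = CardHomAux.mkHom g' b' := congrArg Subtype.val h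
        have hg : g = g' := by
          ext i
          have := congrArg (fun ρ : DihedralGroup m →* DihedralGroup n => ρ (.r i)) h'
          simpa [CardHomAux.mkHom_r, r.injEq] using this
        have hb : b = b' := by
          have := congrArg (fun ρ : DihedralGroup m →* DihedralGroup n => ρ (.sr 0)) h'
          simpa [CardHomAux.mkHom_sr, sr.injEq] using this
        simp [hg, hb]
      · rintro ⟨ρ, hrot, b, hb⟩
        rw [← mem_powers_iff_mem_zpowers] at hrot
        obtain ⟨k, hk0⟩ := hrot
        have hk : DihedralGroup.r ((k : ℕ) : ZMod n) = ρ (.r 1) := by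
          rw [← r_one_pow]; exact hk0
        set a : ZMod n := ((k : ℕ) : ZMod n) with ha
        -- hk : r a = ρ (r 1)
        have hma : (m : ℤ) • a = 0 := by
          have h1 : ρ (.r 1) ^ m = 1 := by
            rw [← map_pow, r_one_pow, ZMod.natCast_self, ← one_def, map_one]
          rw [← hk, ← r_one_pow, ← pow_mul, r_one_pow, one_def, r.injEq] at h1
          rw [zsmul_eq_mul]
          push_cast at h1 ⊢
          rw [mul_comm]
          exact h1
        have hra : ∀ t : ℕ, (DihedralGroup.r a : DihedralGroup n) ^ t
            = DihedralGroup.r ((t : ZMod n) * a) := by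
          intro t
          rw [ha, ← r_one_pow, ← pow_mul, r_one_pow, r.injEq]
          push_cast
          ring
        set g : ZMod m →+ ZMod n := ZMod.lift m ⟨zmultiplesHom (ZMod n) a, hma⟩ with hgdef
        have hg : ∀ j : ℕ, g ((j : ℕ) : ZMod m) = (j : ZMod n) * a := by
          intro j
          have hc : (((j : ℤ) : ZMod m)) = ((j : ℕ) : ZMod m) := by push_cast; rfl
          rw [← hc, hgdef, ZMod.lift_coe]
          rw [zmultiplesHom_apply, zsmul_eq_mul]
          push_cast
          ring
        refine ⟨(g, b), Subtype.ext ?_⟩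
        show CardHomAux.mkHom g b = ρ
        ext x
        rcases x with i | i
        · have hi : (DihedralGroup.r i : DihedralGroup m) = (DihedralGroup.r 1) ^ i.val := by
            rw [r_one_pow, ZMod.natCast_val, ZMod.cast_id]
          have hgi : g i = (i.val : ZMod n) * a := by
            have h0 : ((i.val : ℕ) : ZMod m) = i := by rw [ZMod.natCast_val, ZMod.cast_id]
            conv_lhs => rw [← h0]
            exact hg i.val
          rw [CardHomAux.mkHom_r, hgi, hi, map_pow, ← hk, hra]
        · have hsi : (DihedralGroup.sr i : DihedralGroup m)
              = DihedralGroup.sr 0 * DihedralGroup.r i := by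
            rw [sr_mul_r, zero_add]
          have hgi : g i = (i.val : ZMod n) * a := by
            have h0 : ((i.val : ℕ) : ZMod m) = i := by rw [ZMod.natCast_val, ZMod.cast_id]
            conv_lhs => rw [← h0]
            exact hg i.val
          have hi : (DihedralGroup.r i : DihedralGroup m) = (DihedralGroup.r 1) ^ i.val := by
            rw [r_one_pow, ZMod.natCast_val, ZMod.cast_id]
          rw [CardHomAux.mkHom_sr, hsi, map_mul, hb, hi, map_pow, ← hk, hra, sr_mul_r, hgi]
    · -- membership in zpowers
      show CardHomAux.mkHom p.1 p.2 (.r 1) ∈ _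
      rw [CardHomAux.mkHom_r]
      refine ⟨((p.1 1).val : ℤ), ?_⟩
      show DihedralGroup.r (1 : ZMod n) ^ (((p.1 1).val : ℕ) : ℤ) = _
      rw [zpow_natCast, r_one_pow, ZMod.natCast_val, ZMod.cast_id]
    · show CardHomAux.mkHom p.1 p.2 (.sr 0) = _
      rw [CardHomAux.mkHom_sr, map_zero, add_zero]
  rw [← key, Nat.card_prod, Nat.card_zmod, CardHomAux.card_addHom m n hm hn,
    Nat.sum_totient, mul_comm]
end
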